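/- The function F₂ : ℝ³ → ℝ defined by F₂(s,λ,r) = −(1/16)·sinh(4s)·e^{−8λ} − (1/4)·(16r − s)·e^{8λ} satisfies the partial differential equation ∂³F₂/∂s²∂λ − 8·∂²F₂/∂s² − 16·∂F₂/∂λ + 128·F₂ = 0 at every point of ℝ³. -/
import Mathlib


/-- The generating function of the genus-2 Donaldson invariants of Σ₂ × ℙ¹:
    F₂(s,λ,r) = −(1/16)·sinh(4s)·e^{−8λ} − (1/4)·(16r − s)·e^{8λ}. -/
noncomputable def F₂ (s l r : ℝ) : ℝ :=
  -(1 / 16) * Real.sinh (4 * s) * Real.exp (-8 * l)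
    - (1 / 4) * (16 * r - s) * Real.exp (8 * l)

private lemma hasDerivAt_exp_mul (c x : ℝ) :
    HasDerivAt (fun y : ℝ => Real.exp (c * y)) (c * Real.exp (c * x)) x := by
  have h : HasDerivAt (fun y : ℝ => c * y) c x := by
    simpa using (hasDerivAt_id x).const_mul c
  simpa [Function.comp_def, mul_comm] using (Real.hasDerivAt_exp (c * x)).comp x h

private lemma hasDerivAt_sinh4 (x : ℝ) :
    HasDerivAt (fun y : ℝ => Real.sinh (4 * y)) (4 * Real.cosh (4 * x)) x := by
  have h : HasDerivAt (fun y : ℝ => 4 * y) 4 x := by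
    simpa using (hasDerivAt_id x).const_mul (4 : ℝ)
  simpa [Function.comp_def, mul_comm] using (Real.hasDerivAt_sinh (4 * x)).comp x h

private lemma hasDerivAt_cosh4 (x : ℝ) :
    HasDerivAt (fun y : ℝ => Real.cosh (4 * y)) (4 * Real.sinh (4 * x)) x := by
  have h : HasDerivAt (fun y : ℝ => 4 * y) 4 x := by
    simpa using (hasDerivAt_id x).const_mul (4 : ℝ)
  simpa [Function.comp_def, mul_comm] using (Real.hasDerivAt_cosh (4 * x)).comp x h

private lemma deriv_l (s r l : ℝ) :
    deriv (fun l' => F₂ s l' r) l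
      = (1/2) * Real.sinh (4*s) * Real.exp (-8*l) - 2 * (16*r - s) * Real.exp (8*l) := by
  have h : HasDerivAt (fun l' => F₂ s l' r)
      (-(1/16) * Real.sinh (4*s) * (-8 * Real.exp (-8*l))
        - (1/4) * (16*r - s) * (8 * Real.exp (8*l))) l :=
    ((hasDerivAt_exp_mul (-8) l).const_mul (-(1/16) * Real.sinh (4*s))).sub
      ((hasDerivAt_exp_mul 8 l).const_mul ((1/4) * (16*r - s)))
  rw [show (fun l' => F₂ s l' r) = fun l' =>
      -(1/16) * Real.sinh (4*s) * Real.exp (-8*l')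
        - (1/4) * (16*r - s) * Real.exp (8*l') from rfl] at *
  rw [h.deriv]; ring

private lemma deriv_F_s (l r x : ℝ) :
    deriv (fun s' => F₂ s' l r) x
      = -(1/4) * Real.cosh (4*x) * Real.exp (-8*l) + (1/4) * Real.exp (8*l) := by
  have h : HasDerivAt (fun s' => F₂ s' l r)
      ((-(1/16) * (4 * Real.cosh (4*x))) * Real.exp (-8*l)
        - ((1/4) * (0 - 1)) * Real.exp (8*l)) x :=
    (((hasDerivAt_sinh4 x).const_mul (-(1/16))).mul_const (Real.exp (-8*l))).sub
      ((((hasDerivAt_const x (16*r)).sub (hasDerivAt_id x)).const_mul (1/4)).mul_const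
        (Real.exp (8*l)))
  rw [h.deriv]; ring

private lemma iter2_F (l r s : ℝ) :
    iteratedDeriv 2 (fun s' => F₂ s' l r) s
      = - Real.sinh (4*s) * Real.exp (-8*l) := by
  rw [iteratedDeriv_succ, iteratedDeriv_one,
    show deriv (fun s' => F₂ s' l r) = fun x =>
      -(1/4) * Real.cosh (4*x) * Real.exp (-8*l) + (1/4) * Real.exp (8*l) from
      funext (deriv_F_s l r)]
  have h : HasDerivAt (fun x : ℝ =>
      -(1/4) * Real.cosh (4*x) * Real.exp (-8*l) + (1/4) * Real.exp (8*l))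
      ((-(1/4) * (4 * Real.sinh (4*s))) * Real.exp (-8*l)) s :=
    (((hasDerivAt_cosh4 s).const_mul (-(1/4))).mul_const (Real.exp (-8*l))).add_const
      ((1/4) * Real.exp (8*l))
  rw [h.deriv]; ring

private lemma iter2_Dl (l r s : ℝ) :
    iteratedDeriv 2 (fun s' => deriv (fun l' => F₂ s' l' r) l) s
      = 8 * Real.sinh (4*s) * Real.exp (-8*l) := by
  rw [show (fun s' => deriv (fun l' => F₂ s' l' r) l) = fun s' =>
      (1/2) * Real.sinh (4*s') * Real.exp (-8*l) - 2 * (16*r - s') * Real.exp (8*l) from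
      funext fun s' => deriv_l s' r l]
  have hd1 : ∀ x : ℝ, deriv (fun s' : ℝ =>
      (1/2) * Real.sinh (4*s') * Real.exp (-8*l) - 2 * (16*r - s') * Real.exp (8*l)) x
      = 2 * Real.cosh (4*x) * Real.exp (-8*l) + 2 * Real.exp (8*l) := by
    intro x
    have h : HasDerivAt (fun s' : ℝ =>
        (1/2) * Real.sinh (4*s') * Real.exp (-8*l) - 2 * (16*r - s') * Real.exp (8*l))
        (((1/2) * (4 * Real.cosh (4*x))) * Real.exp (-8*l)
          - (2 * (0 - 1)) * Real.exp (8*l)) x :=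
      (((hasDerivAt_sinh4 x).const_mul (1/2)).mul_const (Real.exp (-8*l))).sub
        ((((hasDerivAt_const x (16*r)).sub (hasDerivAt_id x)).const_mul 2).mul_const
          (Real.exp (8*l)))
    rw [h.deriv]; ring
  rw [iteratedDeriv_succ, iteratedDeriv_one, funext hd1]
  have h : HasDerivAt (fun x : ℝ =>
      2 * Real.cosh (4*x) * Real.exp (-8*l) + 2 * Real.exp (8*l))
      ((2 * (4 * Real.sinh (4*s))) * Real.exp (-8*l)) s :=
    (((hasDerivAt_cosh4 s).const_mul 2).mul_const (Real.exp (-8*l))).add_const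
      (2 * Real.exp (8*l))
  rw [h.deriv]; ring

/-- F₂ satisfies ∂³F₂/∂s²∂λ − 8·∂²F₂/∂s² − 16·∂F₂/∂λ + 128·F₂ = 0 everywhere
    (the relation (α² − 16)(β − 8)). -/
theorem F₂_pde_alpha_sq_sub_16_mul_beta_sub_8 (s l r : ℝ) :
    iteratedDeriv 2 (fun s' => deriv (fun l' => F₂ s' l' r) l) s
      - 8 * iteratedDeriv 2 (fun s' => F₂ s' l r) s
      - 16 * deriv (fun l' => F₂ s l' r) l
      + 128 * F₂ s l r = 0 := by
  rw [iter2_Dl, iter2_F, deriv_l, F₂]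
  ring
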